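/- There exists an absolute constant C0 > 0 such that for every d ≥ 3 the following holds: any estimator T̂ (measurable function of y, not depending on σ) satisfying sup_{θ ∈ Θ_1} E_{θ,σ}[(T̂(y) − L(θ))²] ≤ C0 σ² d for all σ > 0, must satisfy, for every fixed σ > 0, sup_{θ ∈ Θ_d} E_{θ,σ}[(T̂(y) − L(θ))²] = ∞. -/

import Mathlib

open MeasureTheory ProbabilityTheory

/-- Law of `y = θ + σ·ξ` with `ξ` i.i.d. standard normal: the product of Gaussians `N(θ j, σ²)`. -/
noncomputable def gaussMeasure (d : ℕ) (θ : Fin d → ℝ) (σ : ℝ) : Measure (Fin d → ℝ) :=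
  Measure.pi fun j => gaussianReal (θ j) (Real.toNNReal (σ ^ 2))

/-- The sparsity class `Θ_s`: vectors with at most `s` nonzero coordinates. -/
def Theta (d s : ℕ) : Set (Fin d → ℝ) := {θ | {j | θ j ≠ 0}.ncard ≤ s}

/-- The linear functional `L(θ) = ∑ θ_j`. -/
noncomputable def Lfun (d : ℕ) (θ : Fin d → ℝ) : ℝ := ∑ j, θ j

/-- The rate `Φ^L(σ, s) = σ² s² log(1 + d (log d) / s²)`. -/
noncomputable def PhiL (d : ℕ) (σ : ℝ) (s : ℕ) : ℝ :=
  σ ^ 2 * (s : ℝ) ^ 2 * Real.log (1 + (d : ℝ) * Real.log d / (s : ℝ) ^ 2)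

section Auxiliary

open Real Set
open scoped ENNReal NNReal

attribute [local fun_prop] ProbabilityTheory.measurable_gaussianPDF

lemma gaussPDF_mul (a b : ℝ≥0) (ha : a ≠ 0) (hb : b ≠ 0) (z x : ℝ) :
    gaussianPDFReal 0 a x * gaussianPDFReal 0 b (z - x)
      = gaussianPDFReal 0 (a + b) z
        * gaussianPDFReal ((a : ℝ) * z / ((a : ℝ) + b)) (a * b / (a + b)) x := by
  have hA : (0 : ℝ) < a := lt_of_le_of_ne a.coe_nonneg (by exact_mod_cast (Ne.symm ha))
  have hB : (0 : ℝ) < b := lt_of_le_of_ne b.coe_nonneg (by exact_mod_cast (Ne.symm hb))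
  have hAB : (0 : ℝ) < (a : ℝ) + b := by linarith
  have hw : ((a * b / (a + b) : ℝ≥0) : ℝ) = (a : ℝ) * b / ((a : ℝ) + b) := by push_cast; ring
  simp only [gaussianPDFReal, NNReal.coe_add, hw, sub_zero]
  have hconst : (√(2 * π * a))⁻¹ * (√(2 * π * b))⁻¹
      = (√(2 * π * ((a : ℝ) + b)))⁻¹ * (√(2 * π * ((a : ℝ) * b / ((a : ℝ) + b))))⁻¹ := by
    rw [← mul_inv, ← mul_inv, ← Real.sqrt_mul (by positivity), ← Real.sqrt_mul (by positivity)]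
    congr 1
    field_simp
  have hexp : rexp (-x ^ 2 / (2 * a)) * rexp (-(z - x) ^ 2 / (2 * b))
      = rexp (-z ^ 2 / (2 * ((a : ℝ) + b)))
        * rexp (-(x - (a : ℝ) * z / ((a : ℝ) + b)) ^ 2 / (2 * ((a : ℝ) * b / ((a : ℝ) + b)))) := by
    rw [← Real.exp_add, ← Real.exp_add]
    congr 1
    field_simp
    ring
  calc (√(2 * π * a))⁻¹ * rexp (-x ^ 2 / (2 * a))
      * ((√(2 * π * b))⁻¹ * rexp (-(z - x) ^ 2 / (2 * b)))
      = ((√(2 * π * a))⁻¹ * (√(2 * π * b))⁻¹)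
        * (rexp (-x ^ 2 / (2 * a)) * rexp (-(z - x) ^ 2 / (2 * b))) := by ring
    _ = _ := by rw [hconst, hexp]; ring

lemma gauss_conv_lintegral (a b : ℝ≥0) (ha : a ≠ 0) (hb : b ≠ 0)
    {f : ℝ → ℝ≥0∞} (hf : Measurable f) :
    ∫⁻ x, ∫⁻ y, f (x + y) ∂(gaussianReal 0 b) ∂(gaussianReal 0 a)
      = ∫⁻ z, f z ∂(gaussianReal 0 (a + b)) := by
  have hw : (a * b / (a + b) : ℝ≥0) ≠ 0 := by
    refine div_ne_zero (mul_ne_zero ha hb) ?_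
    simpa using fun h _ => ha h
  rw [gaussianReal_of_var_ne_zero _ ha, gaussianReal_of_var_ne_zero _ hb,
    gaussianReal_of_var_ne_zero _ (show a + b ≠ 0 by simpa using fun h _ => ha h)]
  rw [lintegral_withDensity_eq_lintegral_mul _ (measurable_gaussianPDF _ _) hf]
  have h0 : ∀ x : ℝ, ∫⁻ y, f (x + y) ∂(volume.withDensity (gaussianPDF 0 b))
      = ∫⁻ z, gaussianPDF 0 b (z - x) * f z := by
    intro x
    rw [lintegral_withDensity_eq_lintegral_mul _ (measurable_gaussianPDF _ _) (by fun_prop)]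
    calc ∫⁻ y, (gaussianPDF 0 b * fun y => f (x + y)) y
        = ∫⁻ y, (fun z => gaussianPDF 0 b (z - x) * f z) (y + x) := by
          congr 1; funext y
          show gaussianPDF 0 b y * f (x + y) = gaussianPDF 0 b (y + x - x) * f (y + x)
          rw [add_sub_cancel_right, add_comm x y]
      _ = ∫⁻ z, gaussianPDF 0 b (z - x) * f z :=
          lintegral_add_right_eq_self (fun z => gaussianPDF 0 b (z - x) * f z) x
  simp only [h0]
  rw [lintegral_withDensity_eq_lintegral_mul _ (measurable_gaussianPDF _ _)
    (Measurable.lintegral_prod_right (by fun_prop))]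
  simp only [Pi.mul_apply]
  calc ∫⁻ x, gaussianPDF 0 a x * ∫⁻ z, gaussianPDF 0 b (z - x) * f z
      = ∫⁻ x, ∫⁻ z, gaussianPDF 0 a x * (gaussianPDF 0 b (z - x) * f z) := by
        congr 1; funext x
        rw [lintegral_const_mul _ (by fun_prop)]
    _ = ∫⁻ z, ∫⁻ x, gaussianPDF 0 a x * (gaussianPDF 0 b (z - x) * f z) := by
        apply lintegral_lintegral_swap
        fun_prop
    _ = ∫⁻ z, gaussianPDF 0 (a + b) z * f z := by
        congr 1; funext z
        have hpt : ∀ x : ℝ, gaussianPDF 0 a x * (gaussianPDF 0 b (z - x) * f z)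
            = gaussianPDF 0 (a + b) z
              * (gaussianPDF ((a : ℝ) * z / ((a : ℝ) + b)) (a * b / (a + b)) x * f z) := by
          intro x
          simp only [gaussianPDF, ← mul_assoc, ← ENNReal.ofReal_mul (gaussianPDFReal_nonneg _ _ _)]
          rw [gaussPDF_mul a b ha hb z x]
        simp only [hpt]
        rw [lintegral_const_mul _ (by fun_prop), lintegral_mul_const _ (by fun_prop),
          lintegral_gaussianPDF_eq_one _ hw, one_mul]

lemma gauss_conv (a b : ℝ≥0) :
    Measure.map (fun p : ℝ × ℝ => p.1 + p.2) ((gaussianReal 0 a).prod (gaussianReal 0 b))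
      = gaussianReal 0 (a + b) := by
  rcases eq_or_ne a 0 with rfl | ha
  · rw [zero_add, gaussianReal_zero_var, Measure.dirac_prod,
      Measure.map_map measurable_add (by fun_prop)]
    simp only [Function.comp_def, zero_add]
    exact Measure.map_id
  rcases eq_or_ne b 0 with rfl | hb
  · rw [add_zero, gaussianReal_zero_var, Measure.prod_dirac,
      Measure.map_map measurable_add (by fun_prop)]
    simp only [Function.comp_def, add_zero]
    exact Measure.map_id
  ext s hs
  rw [Measure.map_apply measurable_add hs, Measure.prod_apply (measurable_add hs)]
  have h1 : ∀ x : ℝ, (gaussianReal 0 b) (Prod.mk x ⁻¹' ((fun p : ℝ × ℝ => p.1 + p.2) ⁻¹' s))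
      = ∫⁻ y, s.indicator (1 : ℝ → ℝ≥0∞) (x + y) ∂(gaussianReal 0 b) := by
    intro x
    have h2 : (Prod.mk x ⁻¹' ((fun p : ℝ × ℝ => p.1 + p.2) ⁻¹' s)) = (fun y => x + y) ⁻¹' s := rfl
    rw [h2, ← lintegral_indicator_one ((measurable_const_add x) hs)]
    congr 1
  simp only [h1]
  have h3 := gauss_conv_lintegral a b ha hb (f := s.indicator (1 : ℝ → ℝ≥0∞))
    (measurable_const.indicator hs)
  rw [h3, lintegral_indicator_one hs]

lemma gauss_conv_mp (a b : ℝ≥0) :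
    MeasurePreserving (fun p : ℝ × ℝ => p.1 + p.2)
      ((gaussianReal 0 a).prod (gaussianReal 0 b)) (gaussianReal 0 (a + b)) :=
  ⟨measurable_add, gauss_conv a b⟩

/-- coordinatewise translation of a pi-Gaussian -/
lemma gauss_pi_translate {d : ℕ} (θ : Fin d → ℝ) (b : ℝ≥0) :
    MeasurePreserving (fun z : Fin d → ℝ => fun j => θ j + z j)
      (Measure.pi fun _ => gaussianReal 0 b) (Measure.pi fun j => gaussianReal (θ j) b) :=
  measurePreserving_pi _ _ (fun j =>
    ⟨measurable_const_add _, by rw [gaussianReal_map_const_add, zero_add]⟩)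

/-- the mixture of `N(θ, b)^d` over `θ ~ N(0, a)^d` is `N(0, a+b)^d`. -/
lemma gauss_mixture {d : ℕ} (a b : ℝ≥0) {f : (Fin d → ℝ) → ℝ≥0∞} (hf : Measurable f) :
    ∫⁻ θ, ∫⁻ y, f y ∂(Measure.pi fun j => gaussianReal (θ j) b)
        ∂(Measure.pi fun _ : Fin d => gaussianReal 0 a)
      = ∫⁻ y, f y ∂(Measure.pi fun _ : Fin d => gaussianReal 0 (a + b)) := by
  have h1 : ∀ θ : Fin d → ℝ, ∫⁻ y, f y ∂(Measure.pi fun j => gaussianReal (θ j) b)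
      = ∫⁻ z, f (fun j => θ j + z j) ∂(Measure.pi fun _ => gaussianReal 0 b) :=
    fun θ => ((gauss_pi_translate θ b).lintegral_comp hf).symm
  simp only [h1]
  rw [← lintegral_prod _ (by fun_prop : Measurable fun p : (Fin d → ℝ) × (Fin d → ℝ) =>
    f (fun j => p.1 j + p.2 j)).aemeasurable]
  have hmp2 : MeasurePreserving (fun q : Fin d → ℝ × ℝ => fun j => (q j).1 + (q j).2)
      (Measure.pi fun _ => (gaussianReal 0 a).prod (gaussianReal 0 b))
      (Measure.pi fun _ : Fin d => gaussianReal 0 (a + b)) :=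
    measurePreserving_pi _ _ (fun _ => gauss_conv_mp a b)
  have hmpe := measurePreserving_arrowProdEquivProdArrow ℝ ℝ (Fin d)
    (fun _ => gaussianReal 0 a) (fun _ => gaussianReal 0 b)
  rw [← hmpe.map_eq, lintegral_map (by fun_prop) (MeasurableEquiv.measurable _)]
  exact hmp2.lintegral_comp hf

/-- law of the sum of coordinates of an iid centered Gaussian vector -/
lemma gauss_sum_law : ∀ (n : ℕ) (t : ℝ≥0),
    Measure.map (fun θ : Fin n → ℝ => ∑ j, θ j) (Measure.pi fun _ => gaussianReal 0 t)
      = gaussianReal 0 (n * t)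
  | 0, t => by
    rw [Measure.pi_of_empty, Measure.map_dirac' (by fun_prop)]
    simp
  | (n + 1), t => by
    have hmeasS : Measurable (fun θ : Fin n → ℝ => ∑ j, θ j) := by fun_prop
    have hmp := measurePreserving_piFinSuccAbove (fun _ : Fin (n + 1) => gaussianReal 0 t) 0
    have hcomp : (fun θ : Fin (n + 1) → ℝ => ∑ j, θ j)
        = (fun p : ℝ × ℝ => p.1 + p.2) ∘ (Prod.map id (fun θ : Fin n → ℝ => ∑ j, θ j))
          ∘ (MeasurableEquiv.piFinSuccAbove (fun _ => ℝ) 0) := by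
      funext θ
      simp [MeasurableEquiv.piFinSuccAbove, Fin.sum_univ_succAbove θ 0, Fin.tail]
    have hstep : (fun θ : Fin (n + 1) → ℝ => ∑ j, θ j)
        = ((fun p : ℝ × ℝ => p.1 + p.2) ∘ (Prod.map id (fun θ : Fin n → ℝ => ∑ j, θ j)))
          ∘ (MeasurableEquiv.piFinSuccAbove (fun _ => ℝ) 0) := hcomp
    rw [hstep, ← Measure.map_map (measurable_add.comp
        ((measurable_id.prodMap hmeasS))) (MeasurableEquiv.measurable _),
      hmp.map_eq,
      ← Measure.map_map measurable_add (measurable_id.prodMap hmeasS),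
      ← Measure.map_prod_map _ _ measurable_id hmeasS,
      Measure.map_id, gauss_sum_law n t, gauss_conv]
    congr 1
    push_cast
    ring

/-- mass of the standard Gaussian on `[1, ∞)` is positive -/
lemma gauss_Ici_pos : 0 < gaussianReal 0 1 (Set.Ici 1) := by
  rw [gaussianReal_apply 0 one_ne_zero]
  by_contra h
  push_neg at h
  have h0 : ∫⁻ x in Set.Ici (1 : ℝ), gaussianPDF 0 1 x = 0 := le_antisymm h (zero_le)
  rw [lintegral_eq_zero_iff (measurable_gaussianPDF 0 1)] at h0
  have h1 : (volume.restrict (Set.Ici (1 : ℝ))) {x | ¬ gaussianPDF 0 1 x = (0 : ℝ → ℝ≥0∞) x} = 0 :=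
    ae_iff.mp h0
  simp only [Pi.zero_apply] at h1
  have h2 : {x : ℝ | ¬ gaussianPDF 0 1 x = 0} = Set.univ := by
    ext x; simpa using (gaussianPDF_pos 0 one_ne_zero x).ne'
  rw [h2, Measure.restrict_apply MeasurableSet.univ, Set.univ_inter, Real.volume_Ici] at h1
  exact ENNReal.top_ne_zero h1

/-- scaling: mass of `N(0,V)` above `√V`. -/
lemma gauss_Ici_sqrt (V : ℝ≥0) (hV : V ≠ 0) :
    gaussianReal 0 V (Set.Ici (Real.sqrt V)) = gaussianReal 0 1 (Set.Ici 1) := by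
  have hVpos : (0 : ℝ) < (V : ℝ) := lt_of_le_of_ne V.coe_nonneg (by exact_mod_cast (Ne.symm hV))
  have hc : (0 : ℝ) < Real.sqrt V := Real.sqrt_pos.mpr hVpos
  have hmap := gaussianReal_map_const_mul (μ := 0) (v := 1) (Real.sqrt V)
  have hvar : (NNReal.mk ((Real.sqrt V) ^ 2) (sq_nonneg _)) * 1 = V := by
    ext
    simp [Real.sq_sqrt V.coe_nonneg]
  rw [hvar, mul_zero] at hmap
  rw [← hmap, Measure.map_apply (measurable_const_mul _) measurableSet_Ici]
  congr 1
  ext x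
  simp only [Set.mem_preimage, Set.mem_Ici]
  constructor
  · intro hx; nlinarith
  · intro hx; nlinarith
/-- second-moment lower bound -/
lemma gauss_moment_lb (V : ℝ≥0) (hV : V ≠ 0) :
    ENNReal.ofReal (V : ℝ) * gaussianReal 0 1 (Set.Ici 1)
      ≤ ∫⁻ x, ENNReal.ofReal (x ^ 2) ∂(gaussianReal 0 V) := by
  calc ENNReal.ofReal (V : ℝ) * gaussianReal 0 1 (Set.Ici 1)
      = ENNReal.ofReal (V : ℝ) * gaussianReal 0 V (Set.Ici (Real.sqrt V)) := by
        rw [gauss_Ici_sqrt V hV]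
    _ = ∫⁻ _ in Set.Ici (Real.sqrt V), ENNReal.ofReal (V : ℝ) ∂(gaussianReal 0 V) := by
        rw [setLIntegral_const]
    _ ≤ ∫⁻ x in Set.Ici (Real.sqrt V), ENNReal.ofReal (x ^ 2) ∂(gaussianReal 0 V) := by
        refine setLIntegral_mono (by fun_prop) (fun x hx => ?_)
        refine ENNReal.ofReal_le_ofReal ?_
        have h1 : Real.sqrt V ≤ x := hx
        nlinarith [Real.sq_sqrt V.coe_nonneg, Real.sqrt_nonneg (V : ℝ)]
    _ ≤ ∫⁻ x, ENNReal.ofReal (x ^ 2) ∂(gaussianReal 0 V) := setLIntegral_le_lintegral _ _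

end Auxiliary

section Main

open Real Set
open scoped ENNReal NNReal

/-- Proposition 3: when `σ` is unknown, any estimator whose maximal risk over `Θ₁` is at most
`C₀ σ² d` for every `σ > 0` must have an infinite maximal risk over `Θ_d`, for every fixed
`σ > 0`. -/
theorem no_simultaneous_adaptation_to_sigma :
    ∃ C0 : ℝ, 0 < C0 ∧
      ∀ d : ℕ, 3 ≤ d → ∀ T : (Fin d → ℝ) → ℝ, Measurable T →
        (∀ σ : ℝ, 0 < σ → ∀ θ ∈ Theta d 1,
            ∫⁻ y, ENNReal.ofReal ((T y - Lfun d θ) ^ 2) ∂(gaussMeasure d θ σ)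
              ≤ ENNReal.ofReal (C0 * σ ^ 2 * d)) →
        ∀ σ : ℝ, 0 < σ →
          (⨆ θ ∈ Theta d d,
            ∫⁻ y, ENNReal.ofReal ((T y - Lfun d θ) ^ 2) ∂(gaussMeasure d θ σ)) = ⊤ := by
  set K : ℝ≥0∞ := gaussianReal 0 1 (Set.Ici 1) with hKdef
  have hKfin : K ≠ ⊤ := measure_ne_top _ _
  set K' : ℝ := K.toReal with hK'def
  have hK'0 : 0 < K' := ENNReal.toReal_pos gauss_Ici_pos.ne' hKfin
  refine ⟨K' / 4, by positivity, ?_⟩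
  intro d hd T hT hH σ hσ
  by_contra hS
  set R : (Fin d → ℝ) → ℝ≥0∞ :=
    fun θ => ∫⁻ y, ENNReal.ofReal ((T y - Lfun d θ) ^ 2) ∂(gaussMeasure d θ σ) with hRdef
  set S : ℝ≥0∞ := ⨆ θ ∈ Theta d d, R θ with hSdef
  have hRS : ∀ θ : Fin d → ℝ, R θ ≤ S := by
    intro θ
    refine le_iSup₂ (f := fun (θ : Fin d → ℝ) (_ : θ ∈ Theta d d) => R θ) θ ?_
    show {j | θ j ≠ 0}.ncard ≤ d
    refine le_trans (Set.ncard_le_ncard (Set.subset_univ _) Set.finite_univ) ?_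
    rw [Set.ncard_univ]
    simp [Nat.card_eq_fintype_card]
  -- key inequality for every τ > 0
  have key : ∀ τ : ℝ, 0 < τ →
      ENNReal.ofReal (d * τ ^ 2) * K
        ≤ 2 * S + 2 * ENNReal.ofReal (K' / 4 * (σ ^ 2 + τ ^ 2) * d) := by
    intro τ hτ
    set a : ℝ≥0 := Real.toNNReal (τ ^ 2) with hadef
    set b : ℝ≥0 := Real.toNNReal (σ ^ 2) with hbdef
    have ha : a ≠ 0 := (Real.toNNReal_pos.mpr (by positivity)).ne'
    have hacoe : (a : ℝ) = τ ^ 2 := Real.coe_toNNReal _ (by positivity)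
    have hbcoe : (b : ℝ) = σ ^ 2 := Real.coe_toNNReal _ (by positivity)
    set Pa : Measure (Fin d → ℝ) := Measure.pi fun _ => gaussianReal 0 a with hPadef
    -- lower bound
    have hda : (d : ℝ≥0) * a ≠ 0 := by
      refine mul_ne_zero (Nat.cast_ne_zero.mpr (by omega)) ha
    have hlow : ENNReal.ofReal (d * τ ^ 2) * K
        ≤ ∫⁻ θ, ENNReal.ofReal ((Lfun d θ) ^ 2) ∂Pa := by
      have h1 := gauss_moment_lb ((d : ℝ≥0) * a) hda
      have h2 : (((d : ℝ≥0) * a : ℝ≥0) : ℝ) = d * τ ^ 2 := by push_cast [hacoe]; ring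
      rw [h2] at h1
      refine h1.trans (le_of_eq ?_)
      rw [← gauss_sum_law d a, lintegral_map (by fun_prop) (by fun_prop)]
      rfl
    -- upper bound
    set W : (Fin d → ℝ) → ℝ≥0∞ :=
      fun θ => ∫⁻ y, ENNReal.ofReal ((T y) ^ 2)
        ∂(Measure.pi fun j => gaussianReal (θ j) b) with hWdef
    have hpt : ∀ θ : Fin d → ℝ,
        ENNReal.ofReal ((Lfun d θ) ^ 2) ≤ 2 * S + 2 * W θ := by
      intro θ
      set Q : Measure (Fin d → ℝ) := Measure.pi fun j => gaussianReal (θ j) b with hQdef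
      haveI : IsProbabilityMeasure Q := by rw [hQdef]; infer_instance
      have hQR : Q = gaussMeasure d θ σ := rfl
      have hc : ENNReal.ofReal ((Lfun d θ) ^ 2)
          = ∫⁻ _, ENNReal.ofReal ((Lfun d θ) ^ 2) ∂Q := by
        rw [lintegral_const, measure_univ, mul_one]
      rw [hc]
      have hmono : ∫⁻ y, ENNReal.ofReal ((Lfun d θ) ^ 2) ∂Q
          ≤ ∫⁻ y, (2 * ENNReal.ofReal ((T y - Lfun d θ) ^ 2)
              + 2 * ENNReal.ofReal ((T y) ^ 2)) ∂Q := by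
        refine lintegral_mono (fun y => ?_)
        have hr : (Lfun d θ) ^ 2 ≤ 2 * (T y - Lfun d θ) ^ 2 + 2 * (T y) ^ 2 := by
          nlinarith [sq_nonneg (2 * T y - Lfun d θ)]
        calc ENNReal.ofReal ((Lfun d θ) ^ 2)
            ≤ ENNReal.ofReal (2 * (T y - Lfun d θ) ^ 2 + 2 * (T y) ^ 2) :=
              ENNReal.ofReal_le_ofReal hr
          _ = ENNReal.ofReal (2 * (T y - Lfun d θ) ^ 2)
              + ENNReal.ofReal (2 * (T y) ^ 2) :=
              ENNReal.ofReal_add (by positivity) (by positivity)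
          _ = 2 * ENNReal.ofReal ((T y - Lfun d θ) ^ 2) + 2 * ENNReal.ofReal ((T y) ^ 2) := by
              rw [ENNReal.ofReal_mul (by norm_num), ENNReal.ofReal_mul (by norm_num)]
              norm_num
      refine hmono.trans ?_
      rw [lintegral_add_left (by fun_prop : Measurable fun y => 2 * ENNReal.ofReal ((T y - Lfun d θ) ^ 2)),
        lintegral_const_mul _ (by fun_prop : Measurable fun y => ENNReal.ofReal ((T y - Lfun d θ) ^ 2)),
        lintegral_const_mul _ ((hT.pow_const 2).ennreal_ofReal)]
      have h5 : ∫⁻ y, ENNReal.ofReal ((T y - Lfun d θ) ^ 2) ∂Q ≤ S := by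
        rw [hQR]; exact hRS θ
      exact add_le_add (by exact mul_le_mul_right h5 2) le_rfl
    have hup : ∫⁻ θ, ENNReal.ofReal ((Lfun d θ) ^ 2) ∂Pa
        ≤ 2 * S + 2 * ENNReal.ofReal (K' / 4 * (σ ^ 2 + τ ^ 2) * d) := by
      haveI : IsProbabilityMeasure Pa := by rw [hPadef]; infer_instance
      refine (lintegral_mono hpt).trans ?_
      rw [lintegral_add_left measurable_const, lintegral_const, measure_univ, mul_one,
        lintegral_const_mul' _ _ (by norm_num : (2 : ℝ≥0∞) ≠ ⊤)]
      refine add_le_add le_rfl ?_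
      refine mul_le_mul_right ?_ 2
      have hmix := gauss_mixture (d := d) a b (f := fun y => ENNReal.ofReal ((T y) ^ 2))
        (hT.pow_const 2).ennreal_ofReal
      rw [hPadef, hWdef]
      rw [hmix]
      -- apply the hypothesis at mean 0 and noise level √(σ² + τ²)
      set ρ : ℝ := Real.sqrt (σ ^ 2 + τ ^ 2) with hρdef
      have hρpos : 0 < ρ := Real.sqrt_pos.mpr (by positivity)
      have hρsq : ρ ^ 2 = σ ^ 2 + τ ^ 2 := Real.sq_sqrt (by positivity)
      have h0mem : (0 : Fin d → ℝ) ∈ Theta d 1 := by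
        show {j : Fin d | (0 : Fin d → ℝ) j ≠ 0}.ncard ≤ 1
        simp
      have hHa := hH ρ hρpos 0 h0mem
      have hL0 : Lfun d (0 : Fin d → ℝ) = 0 := by simp [Lfun]
      have hGM : gaussMeasure d (0 : Fin d → ℝ) ρ
          = Measure.pi fun _ : Fin d => gaussianReal 0 (a + b) := by
        unfold gaussMeasure
        congr 1
        funext j
        congr 1
        rw [hρsq, Real.toNNReal_add (by positivity) (by positivity), hadef, hbdef]
        ring
      rw [hGM, hL0] at hHa
      simp only [sub_zero] at hHa
      refine hHa.trans (le_of_eq ?_)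
      congr 1
      rw [hρsq]
    exact hlow.trans hup
  -- numeric contradiction
  have hS' : S ≠ ⊤ := hS
  set S' : ℝ := S.toReal with hS'def
  have hS'0 : 0 ≤ S' := ENNReal.toReal_nonneg
  set t0 : ℝ := 4 * S' / K' + σ ^ 2 * d + 1 with ht0def
  have ht0pos : 0 < t0 := by positivity
  have hτpos : 0 < Real.sqrt t0 := Real.sqrt_pos.mpr ht0pos
  have hkey := key (Real.sqrt t0) hτpos
  rw [Real.sq_sqrt ht0pos.le] at hkey
  have hd3 : (3 : ℝ) ≤ d := by exact_mod_cast hd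
  -- rewrite everything with ofReal
  have hSof : S = ENNReal.ofReal S' := (ENNReal.ofReal_toReal hS').symm
  have hKof : K = ENNReal.ofReal K' := (ENNReal.ofReal_toReal hKfin).symm
  rw [hSof, hKof, ← ENNReal.ofReal_mul (by positivity),
    ← ENNReal.ofReal_ofNat 2, ← ENNReal.ofReal_mul (by norm_num),
    ← ENNReal.ofReal_mul (by norm_num), ← ENNReal.ofReal_add (by positivity) (by positivity)]
    at hkey
  have hreal : (d : ℝ) * t0 * K' ≤ 2 * S' + 2 * (K' / 4 * (σ ^ 2 + t0) * d) := by
    refine (ENNReal.ofReal_le_ofReal_iff (by positivity)).mp hkey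
  have hKt : K' * (4 * S' / K') = 4 * S' := by field_simp
  nlinarith [mul_nonneg hS'0 (by linarith : (0 : ℝ) ≤ (d : ℝ) - 1),
    mul_nonneg (mul_nonneg hK'0.le (sq_nonneg σ)) (mul_nonneg (by positivity : (0:ℝ) ≤ (d:ℝ)) (by linarith : (0 : ℝ) ≤ (d : ℝ) - 1)),
    mul_pos hK'0 (by linarith : (0 : ℝ) < (d : ℝ))]

end Main
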